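/- If an element x of the ZFA cumulative hierarchy (or of a set with a permutation action) has some finite supporting set A, then x has a unique least finite supporting set supp(x); that is, the intersection of all finite supporting sets of x is itself a supporting set. -/

import Mathlib

/-- Atoms: a countably infinite set. -/
abbrev Atom := ℕ

/-- The set of atoms moved by a permutation. -/
def Nontriv (π : Equiv.Perm Atom) : Set Atom := {a | π a ≠ a}

/-- `A` supports `x`: every (finite) permutation fixing every atom of `A` fixes `x`. -/
def Supports {X : Type*} [MulAction (Equiv.Perm Atom) X] (A : Set Atom) (x : X) : Prop :=
  ∀ π : Equiv.Perm Atom, (Nontriv π).Finite → (∀ a ∈ A, π a = a) → π • x = x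

lemma nontriv_swap_finite (a b : Atom) : (Nontriv (Equiv.swap a b)).Finite := by
  apply Set.Finite.subset ((Set.finite_singleton b).insert a)
  intro c hc
  by_contra hmem
  simp only [Set.mem_insert_iff, Set.mem_singleton_iff, not_or] at hmem
  exact hc (Equiv.swap_apply_of_ne_of_ne hmem.1 hmem.2)

lemma swap_eq_three (a b c : Atom) (hab : a ≠ b) (hac : a ≠ c) (hbc : b ≠ c) :
    Equiv.swap a b = Equiv.swap a c * Equiv.swap b c * Equiv.swap a c := by
  have hba := hab.symm
  have hca := hac.symm
  have hcb := hbc.symm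
  ext y
  simp only [Equiv.Perm.mul_apply, Equiv.swap_apply_def]
  by_cases h1 : y = a <;> by_cases h2 : y = b <;> by_cases h3 : y = c <;>
    simp_all

/-- A swap of two atoms not in `A ∩ B` fixes `x` whenever `A` and `B` support `x`. -/
lemma swap_smul_eq {X : Type*} [MulAction (Equiv.Perm Atom) X] (x : X)
    {A B : Set Atom} (hAf : A.Finite) (hBf : B.Finite)
    (hA : Supports A x) (hB : Supports B x)
    {a b : Atom} (ha : a ∉ A ∩ B) (hb : b ∉ A ∩ B) :
    Equiv.swap a b • x = x := by
  by_cases hab : a = b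
  · subst hab
    rw [Equiv.swap_self, show (Equiv.refl Atom) = (1 : Equiv.Perm Atom) from rfl, one_smul]
  -- fixes all of A, or all of B, or mixed case
  by_cases haA : a ∈ A
  · have haB : a ∉ B := fun h => ha ⟨haA, h⟩
    by_cases hbB : b ∈ B
    · have hbA : b ∉ A := fun h => hb ⟨h, hbB⟩
      -- a ∈ A \ B, b ∈ B \ A; pick fresh c
      obtain ⟨c, hc⟩ := ((hAf.union hBf).union ((Set.finite_singleton b).insert a)).infinite_compl.nonempty
      simp only [Set.mem_compl_iff, Set.mem_union, Set.mem_insert_iff,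
        Set.mem_singleton_iff, not_or] at hc
      obtain ⟨⟨hcA, hcB⟩, hca, hcb⟩ := hc
      rw [swap_eq_three a b c hab (fun h => hca h.symm) (fun h => hcb h.symm)]
      have h1 : Equiv.swap a c • x = x := by
        apply hB _ (nontriv_swap_finite a c)
        intro y hy
        exact Equiv.swap_apply_of_ne_of_ne (fun h => haB (h ▸ hy)) (fun h => hcB (h ▸ hy))
      have h2 : Equiv.swap b c • x = x := by
        apply hA _ (nontriv_swap_finite b c)
        intro y hy
        exact Equiv.swap_apply_of_ne_of_ne (fun h => hbA (h ▸ hy)) (fun h => hcA (h ▸ hy))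
      rw [mul_smul, mul_smul, h1, h2, h1]
    · -- b ∉ B, a ∉ B : swap fixes B pointwise
      apply hB _ (nontriv_swap_finite a b)
      intro y hy
      exact Equiv.swap_apply_of_ne_of_ne (fun h => haB (h ▸ hy)) (fun h => hbB (h ▸ hy))
  · by_cases hbA : b ∈ A
    · have hbB : b ∉ B := fun h => hb ⟨hbA, h⟩
      by_cases haB : a ∈ B
      · -- a ∈ B \ A, b ∈ A \ B; pick fresh c
        obtain ⟨c, hc⟩ :=
          ((hAf.union hBf).union ((Set.finite_singleton b).insert a)).infinite_compl.nonempty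
        simp only [Set.mem_compl_iff, Set.mem_union, Set.mem_insert_iff,
          Set.mem_singleton_iff, not_or] at hc
        obtain ⟨⟨hcA, hcB⟩, hca, hcb⟩ := hc
        rw [swap_eq_three a b c hab (fun h => hca h.symm) (fun h => hcb h.symm)]
        have h1 : Equiv.swap a c • x = x := by
          apply hA _ (nontriv_swap_finite a c)
          intro y hy
          exact Equiv.swap_apply_of_ne_of_ne (fun h => haA (h ▸ hy)) (fun h => hcA (h ▸ hy))
        have h2 : Equiv.swap b c • x = x := by
          apply hB _ (nontriv_swap_finite b c)
          intro y hy
          exact Equiv.swap_apply_of_ne_of_ne (fun h => hbB (h ▸ hy)) (fun h => hcB (h ▸ hy))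
        rw [mul_smul, mul_smul, h1, h2, h1]
      · -- a ∉ B, b ∉ B : swap fixes B pointwise
        apply hB _ (nontriv_swap_finite a b)
        intro y hy
        exact Equiv.swap_apply_of_ne_of_ne (fun h => haB (h ▸ hy)) (fun h => hbB (h ▸ hy))
    · -- a ∉ A, b ∉ A : swap fixes A pointwise
      apply hA _ (nontriv_swap_finite a b)
      intro y hy
      exact Equiv.swap_apply_of_ne_of_ne (fun h => haA (h ▸ hy)) (fun h => hbA (h ▸ hy))

/-- The intersection of two finite supports is a support. -/
lemma inter_supports {X : Type*} [MulAction (Equiv.Perm Atom) X] (x : X)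
    {A B : Set Atom} (hAf : A.Finite) (hBf : B.Finite)
    (hA : Supports A x) (hB : Supports B x) : Supports (A ∩ B) x := by
  intro π hπ hfix
  -- strong induction on the number of atoms moved by π
  have key : ∀ n : ℕ, ∀ π : Equiv.Perm Atom, ∀ hπ : (Nontriv π).Finite,
      hπ.toFinset.card = n → (∀ a ∈ A ∩ B, π a = a) → π • x = x := by
    intro n
    induction n using Nat.strong_induction_on with
    | _ n ih =>
      intro π hπ hcard hfix
      by_cases hone : π = 1
      · simp [hone]
      · -- pick a moved atom
        have : ∃ a, π a ≠ a := by
          by_contra hno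
          push_neg at hno
          exact hone (Equiv.ext hno)
        obtain ⟨a, ha⟩ := this
        set b := π a with hbdef
        have hab : a ≠ b := fun h => ha h.symm
        have haAB : a ∉ A ∩ B := fun h => ha (hfix a h)
        have hbAB : b ∉ A ∩ B := by
          intro h
          have := hfix b h
          exact ha (π.injective (by rw [this, ← hbdef]))
        set π' := Equiv.swap a b * π with hπ'def
        have hsub : Nontriv π' ⊆ Nontriv π := by
          intro c hc
          simp only [Nontriv, Set.mem_setOf_eq] at hc ⊢
          intro hmem
          apply hc
          rw [hπ'def]
          simp only [Equiv.Perm.mul_apply, hmem]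
          apply Equiv.swap_apply_of_ne_of_ne
          · intro h
            subst h
            exact ha (hbdef.trans hmem)
          · intro h
            subst h
            exact hab (π.injective (hbdef.symm.trans hmem.symm))
        have hπ'fin : (Nontriv π').Finite := hπ.subset hsub
        have hanot : a ∉ Nontriv π' := by
          simp only [Nontriv, Set.mem_setOf_eq, not_not, hπ'def, Equiv.Perm.mul_apply, ← hbdef]
          exact Equiv.swap_apply_right a b
        have hain : a ∈ Nontriv π := ha
        have hcardlt : hπ'fin.toFinset.card < n := by
          rw [← hcard]
          apply Finset.card_lt_card
          rw [Finset.ssubset_iff_of_subset]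
          · exact ⟨a, by simpa using hain, by simpa using hanot⟩
          · intro c hc
            simp only [Set.Finite.mem_toFinset] at hc ⊢
            exact hsub hc
        have hfix' : ∀ c ∈ A ∩ B, π' c = c := by
          intro c hc
          simp only [hπ'def, Equiv.Perm.mul_apply, hfix c hc]
          exact Equiv.swap_apply_of_ne_of_ne (fun h => haAB (h ▸ hc)) (fun h => hbAB (h ▸ hc))
        have hx' : π' • x = x := ih _ hcardlt π' hπ'fin rfl hfix'
        have hswap : Equiv.swap a b • x = x := swap_smul_eq x hAf hBf hA hB haAB hbAB
        calc π • x = (Equiv.swap a b * (Equiv.swap a b * π)) • x := by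
              rw [← mul_assoc, Equiv.swap_mul_self, one_mul]
          _ = x := by rw [mul_smul, hx', hswap]
  exact key _ π hπ rfl hfix

/-- If `x` has some finite supporting set, then the intersection of all finite supporting
sets of `x` is itself a (finite) supporting set, hence `x` has a unique least finite
supporting set `supp x`. -/
theorem least_finite_support_exists {X : Type*} [MulAction (Equiv.Perm Atom) X] (x : X)
    (h : ∃ A : Set Atom, A.Finite ∧ Supports A x) :
    (⋂₀ {A : Set Atom | A.Finite ∧ Supports A x}).Finite ∧
      Supports (⋂₀ {A : Set Atom | A.Finite ∧ Supports A x}) x := by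
  obtain ⟨A₀, hA₀f, hA₀⟩ := h
  set S : Set (Set Atom) := {A : Set Atom | A.Finite ∧ Supports A x} with hSdef
  have hA₀S : A₀ ∈ S := ⟨hA₀f, hA₀⟩
  have hsub : ⋂₀ S ⊆ A₀ := Set.sInter_subset_of_mem hA₀S
  refine ⟨hA₀f.subset hsub, ?_⟩
  -- reduce to finitely many supports: intersections with A₀
  set S' : Set (Set Atom) := (fun A => A ∩ A₀) '' S with hS'def
  have hS'fin : S'.Finite := by
    apply Set.Finite.subset hA₀f.finite_subsets
    rintro _ ⟨A, -, rfl⟩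
    exact Set.inter_subset_right
  have hS'supp : ∀ B ∈ S', B.Finite ∧ Supports B x := by
    rintro _ ⟨A, ⟨hAf, hA⟩, rfl⟩
    exact ⟨hAf.inter_of_left _, inter_supports x hAf hA₀f hA hA₀⟩
  have heq : ⋂₀ S = A₀ ∩ ⋂₀ S' := by
    apply Set.Subset.antisymm
    · intro y hy
      refine ⟨hsub hy, ?_⟩
      rintro _ ⟨A, hAS, rfl⟩
      exact ⟨hy _ hAS, hsub hy⟩
    · rintro y ⟨hy0, hy⟩ A hAS
      exact (hy _ ⟨A, hAS, rfl⟩).1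
  rw [heq]
  -- finite intersection of supports is a support, by induction on the finite family S'
  have main : ∀ T : Set (Set Atom), T.Finite → (∀ B ∈ T, B.Finite ∧ Supports B x) →
      (A₀ ∩ ⋂₀ T).Finite ∧ Supports (A₀ ∩ ⋂₀ T) x := by
    intro T hT
    induction T, hT using Set.Finite.induction_on with
    | empty =>
      intro _
      simpa using ⟨hA₀f, hA₀⟩
    | @insert B T hB hTfin ih =>
      intro hmem
      obtain ⟨hprevf, hprev⟩ := ih (fun C hC => hmem C (Set.mem_insert_of_mem _ hC))
      obtain ⟨hBf, hBsupp⟩ := hmem B (Set.mem_insert _ _)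
      have : A₀ ∩ ⋂₀ insert B T = (A₀ ∩ ⋂₀ T) ∩ B := by
        rw [Set.sInter_insert]
        ext y
        simp only [Set.mem_inter_iff]
        tauto
      rw [this]
      exact ⟨hprevf.inter_of_left _, inter_supports x hprevf hBf hprev hBsupp⟩
  exact (main S' hS'fin hS'supp).2
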